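/- For p∈(0,1), q with 1/p+1/q=1, u>0, define h_u(t)=min_{0≤s≤u} p(|t|s - s^q/q) (with the convention that the term at s=0 is +∞, i.e. the min is over 0<s≤u). Then for every t∈ℝ, 0 ≤ h_u(t) - |t|^p ≤ u^q. -/

import Mathlib

/-- h_u(t) = inf_{0<s≤u} p(|t|s - s^q/q). -/
noncomputable def hApprox (p q u t : ℝ) : ℝ :=
  sInf ((fun s : ℝ => p * (|t| * s - s ^ q / q)) '' Set.Ioc 0 u)

lemma young_aux (p q a s : ℝ) (hp : 0 < p) (hp1 : p < 1) (hq : 1 / p + 1 / q = 1)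
    (hqneg : q < 0) (ha : 0 ≤ a) (hs : 0 < s) :
    a ^ p ≤ p * (a * s - s ^ q / q) := by
  have hq0 : q ≠ 0 := hqneg.ne
  have hpq : p + q = p * q := by field_simp at hq; linarith
  have key := Real.geom_mean_le_arith_mean2_weighted hp.le (by linarith : (0:ℝ) ≤ 1 - p)
    (mul_nonneg ha hs.le) (Real.rpow_nonneg hs.le q) (by ring)
  have hlhs : (a * s) ^ p * (s ^ q) ^ (1 - p) = a ^ p := by
    rw [Real.mul_rpow ha hs.le, ← Real.rpow_mul hs.le, mul_assoc, ← Real.rpow_add hs]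
    have : p + q * (1 - p) = 0 := by ring_nf; linarith
    rw [this, Real.rpow_zero, mul_one]
  have hrhs : p * (a * s) + (1 - p) * s ^ q = p * (a * s - s ^ q / q) := by
    have h1p : 1 - p = -p / q := by
      rw [eq_div_iff hq0]; linarith [hpq]
    rw [h1p]; field_simp; ring
  rw [hlhs, hrhs] at key
  exact key

/-- For every t, 0 ≤ h_u(t) - |t|^p ≤ u^q. -/
theorem stmt_1 (p q u : ℝ) (hp : 0 < p) (hp1 : p < 1) (hq : 1 / p + 1 / q = 1)
    (hu : 0 < u) (t : ℝ) :
    0 ≤ hApprox p q u t - |t| ^ p ∧ hApprox p q u t - |t| ^ p ≤ u ^ q := by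
  set a := |t| with ha_def
  have ha : 0 ≤ a := abs_nonneg t
  have hq0 : q ≠ 0 := by
    intro h; rw [h] at hq; simp at hq; linarith [hq, hp1]
  have hqneg : q < 0 := by
    rcases lt_or_gt_of_ne hq0 with h | h
    · exact h
    · exfalso
      have h1 : 1 / p > 1 := by
        rw [gt_iff_lt, lt_div_iff₀ hp]; linarith
      have h2 : 1 / q > 0 := by positivity
      linarith
  have hpq : p + q = p * q := by field_simp at hq; linarith
  have hne : ((fun s : ℝ => p * (a * s - s ^ q / q)) '' Set.Ioc 0 u).Nonempty :=
    ⟨_, ⟨u, ⟨hu, le_refl u⟩, rfl⟩⟩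
  have hlow : ∀ x ∈ (fun s : ℝ => p * (a * s - s ^ q / q)) '' Set.Ioc 0 u, a ^ p ≤ x := by
    rintro x ⟨s, ⟨hs0, _⟩, rfl⟩
    exact young_aux p q a s hp hp1 hq hqneg ha hs0
  have hbdd : BddBelow ((fun s : ℝ => p * (a * s - s ^ q / q)) '' Set.Ioc 0 u) := ⟨a ^ p, hlow⟩
  have h1 : a ^ p ≤ hApprox p q u t := le_csInf hne hlow
  constructor
  · linarith
  · -- upper bound
    have huq : (0:ℝ) < u ^ q := Real.rpow_pos_of_pos hu q
    have hq1 : q - 1 < 0 := by linarith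
    by_cases hcase : a ≤ u ^ (q - 1)
    · -- hApprox ≤ g(u) ≤ u^q
      have hgu : hApprox p q u t ≤ p * (a * u - u ^ q / q) :=
        csInf_le hbdd ⟨u, ⟨hu, le_refl u⟩, rfl⟩
      have hmul : u ^ (q - 1) * u = u ^ q := by
        rw [← Real.rpow_add_one hu.ne' (q - 1)]; ring_nf
      have hau : a * u ≤ u ^ q := by
        calc a * u ≤ u ^ (q - 1) * u := by
              exact mul_le_mul_of_nonneg_right hcase hu.le
          _ = u ^ q := hmul
      have h1p : (1 - p) * q = -p := by linarith [hpq]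
      have : p * (a * u - u ^ q / q) ≤ u ^ q := by
        have e : p * (a * u - u ^ q / q) = p * (a * u) + (1 - p) * u ^ q := by
          field_simp; nlinarith [h1p]
        rw [e]
        nlinarith [hau]
      have hap : 0 ≤ a ^ p := Real.rpow_nonneg ha p
      linarith
    · push_neg at hcase
      have hupos : (0:ℝ) < u ^ (q - 1) := Real.rpow_pos_of_pos hu (q - 1)
      have hapos : 0 < a := lt_trans hupos hcase
      set s₀ := a ^ ((q - 1)⁻¹) with hs₀def
      have hs₀pos : 0 < s₀ := Real.rpow_pos_of_pos hapos _
      have hinv : (q - 1)⁻¹ < 0 := inv_lt_zero.mpr hq1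
      have hs₀le : s₀ ≤ u := by
        have : a ^ ((q-1)⁻¹) ≤ (u ^ (q - 1)) ^ ((q-1)⁻¹) :=
          (Real.rpow_le_rpow_iff_of_neg hapos hupos hinv).mpr hcase.le
        rwa [Real.rpow_rpow_inv hu.le hq1.ne] at this
      have hmem : p * (a * s₀ - s₀ ^ q / q) ∈
          (fun s : ℝ => p * (a * s - s ^ q / q)) '' Set.Ioc 0 u :=
        ⟨s₀, ⟨hs₀pos, hs₀le⟩, rfl⟩
      have hval : p * (a * s₀ - s₀ ^ q / q) = a ^ p := by
        have hpe : p = q / (q - 1) := by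
          rw [eq_div_iff hq1.ne]; ring_nf; linarith [hpq]
        have he : 1 + (q - 1)⁻¹ = p := by
          rw [hpe]; field_simp [hq1.ne]; ring
        have e1 : a * s₀ = a ^ p := by
          rw [hs₀def, ← Real.rpow_one_add' hapos.le (by rw [he]; exact hp.ne'), he]
        have e2 : s₀ ^ q = a ^ p := by
          rw [hs₀def, ← Real.rpow_mul hapos.le, hpe]
          congr 1
          field_simp
        rw [e1, e2]
        have hp1q : p * (1 - 1/q) = 1 := by
          field_simp; nlinarith [hpq]
        have : a ^ p - a ^ p / q = a ^ p * (1 - 1/q) := by ring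
        rw [this, ← mul_assoc, mul_comm p (a^p), mul_assoc, hp1q, mul_one]
      have : hApprox p q u t ≤ a ^ p := by
        have := csInf_le hbdd hmem
        rwa [hval] at this
      linarith
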